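/- Let D be a finite digraph and m ≤ 0 ≤ n integers. Define the past-future digraph PF(D, m, n) with vertex set Hom(Z_[m,n], D) and edge set Hom(Z_[m,n+1], D), where an edge e goes from its restriction to Z_[m,n] to the restriction of σ ∘ e to Z_[m,n]. Then the standard map f : PF(D,m,n) → D given by (h)f_V = (0)h_V on vertices and (h)f_E = (0,1)h_E on edges is a folding: it induces a bijection between bi-infinite walks in PF(D,m,n) and bi-infinite walks in D. -/

import Mathlib

structure Digraph' where
  V : Type
  E : Type
  s : E → V
  t : E → V

structure DHom (D₁ D₂ : Digraph') where
  vMap : D₁.V → D₂.V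
  eMap : D₁.E → D₂.E
  hs : ∀ e, D₂.s (eMap e) = vMap (D₁.s e)
  ht : ∀ e, D₂.t (eMap e) = vMap (D₁.t e)

def BiWalk (D : Digraph') : Type :=
  { f : ℤ → D.E // ∀ i : ℤ, D.t (f i) = D.s (f (i + 1)) }

def biMap {D₁ D₂ : Digraph'} (φ : DHom D₁ D₂) (w : BiWalk D₁) : BiWalk D₂ :=
  ⟨fun i => φ.eMap (w.1 i), fun i => by rw [φ.ht, φ.hs, w.2 i]⟩

structure FwdWalk (D : Digraph') where
  ed : ℕ → D.E
  chain : ∀ i : ℕ, D.t (ed i) = D.s (ed (i + 1))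

structure BwdWalk (D : Digraph') where
  ed : ℕ → D.E
  chain : ∀ i : ℕ, D.t (ed (i + 1)) = D.s (ed i)

/-- UDAF digraph condition: for each vertex, the number of infinite forwards walks
from it and of infinite backwards walks to it are each `≠ 1`. -/
def IsUDAF (D : Digraph') : Prop :=
  (∀ v : D.V, ¬∃! p : FwdWalk D, D.s (p.ed 0) = v) ∧
  (∀ v : D.V, ¬∃! p : BwdWalk D, D.t (p.ed 0) = v)

/-- A finite walk of length `L` through `D`, with its vertex sequence. -/
structure FWalk (D : Digraph') (L : ℕ) where
  vert : Fin (L + 1) → D.V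
  ed : Fin L → D.E
  hs : ∀ i : Fin L, D.s (ed i) = vert i.castSucc
  ht : ∀ i : Fin L, D.t (ed i) = vert i.succ

def finInit {D : Digraph'} {L : ℕ} (e : FWalk D (L + 1)) : FWalk D L where
  vert i := e.vert i.castSucc
  ed i := e.ed i.castSucc
  hs i := e.hs i.castSucc
  ht i := by rw [e.ht i.castSucc, Fin.succ_castSucc]

def finTail {D : Digraph'} {L : ℕ} (e : FWalk D (L + 1)) : FWalk D L where
  vert i := e.vert i.succ
  ed i := e.ed i.succ
  hs i := by rw [e.hs i.succ, ← Fin.succ_castSucc]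
  ht i := e.ht i.succ

/-- The past-future digraph of `D` with `L` total letters of memory:
vertices are walks of length `L`, edges are walks of length `L + 1`. -/
def PFD (D : Digraph') (L : ℕ) : Digraph' where
  V := FWalk D L
  E := FWalk D (L + 1)
  s := finInit
  t := finTail

/-- The standard folding of the past-future digraph onto `D`. -/
def stdFold (D : Digraph') (L : ℕ) : DHom (PFD D L) D where
  vMap w := w.vert 0
  eMap e := e.ed 0
  hs e := e.hs 0
  ht e := e.ht 0


private theorem FWalk.ext' {D : Digraph'} {L : ℕ} {a b : FWalk D L}
    (he : a.ed = b.ed) (hv : a.vert = b.vert) : a = b := by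
  cases a; cases b; simp_all

private lemma ed_key {D : Digraph'} {L : ℕ} (W : BiWalk (PFD D L)) :
    ∀ (k : ℕ) (hk : k < L + 1) (i : ℤ),
      (W.1 i).ed ⟨k, hk⟩ = (W.1 (i + k)).ed ⟨0, Nat.succ_pos L⟩ := by
  intro k
  induction k with
  | zero => intro hk i; norm_num
  | succ k ih =>
    intro hk i
    have hkL : k < L := Nat.lt_of_succ_lt_succ hk
    have h2 := congrFun (congrArg FWalk.ed (W.2 i)) ⟨k, hkL⟩
    have h3 : (W.1 i).ed ⟨k + 1, hk⟩ = (W.1 (i + 1)).ed ⟨k, Nat.lt_succ_of_lt hkL⟩ := h2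
    rw [h3, ih]
    congr 1
    rw [show i + ((k + 1 : ℕ) : ℤ) = i + 1 + k by push_cast; ring]

private lemma fold_bij (D : Digraph') (L : ℕ) :
    Function.Bijective (biMap (stdFold D L)) := by
  constructor
  · intro W1 W2 h
    have h0 : ∀ i : ℤ, (W1.1 i).ed ⟨0, Nat.succ_pos L⟩ = (W2.1 i).ed ⟨0, Nat.succ_pos L⟩ := by
      intro i
      have := congrFun (congrArg Subtype.val h) i
      simpa [biMap, stdFold, show (0 : Fin (L + 2)) = ⟨0, Nat.succ_pos (L+1)⟩ from rfl] using this
    have hed : ∀ i : ℤ, (W1.1 i).ed = (W2.1 i).ed := by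
      intro i
      funext j
      obtain ⟨k, hk⟩ := j
      rw [ed_key W1, ed_key W2, h0]
    apply Subtype.ext
    funext i
    apply FWalk.ext' (hed i)
    funext j
    obtain ⟨k, hk⟩ := j
    by_cases hkk : k < L + 1
    · have e1 := (W1.1 i).hs ⟨k, hkk⟩
      have e2 := (W2.1 i).hs ⟨k, hkk⟩
      have hc : (⟨k, hkk⟩ : Fin (L+1)).castSucc = ⟨k, hk⟩ := rfl
      rw [hc] at e1 e2
      rw [← e1, ← e2, hed]
    · have hkL : k = L + 1 := by omega
      subst hkL
      have e1 := (W1.1 i).ht ⟨L, Nat.lt_succ_self L⟩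
      have e2 := (W2.1 i).ht ⟨L, Nat.lt_succ_self L⟩
      have hc : (⟨L, Nat.lt_succ_self L⟩ : Fin (L+1)).succ = ⟨L + 1, hk⟩ := rfl
      rw [hc] at e1 e2
      rw [← e1, ← e2, hed]
  · intro f
    refine ⟨⟨fun i => ⟨fun j => D.s (f.1 (i + (j : ℕ))), fun j => f.1 (i + (j : ℕ)),
        fun j => rfl, fun j => ?_⟩, fun i => ?_⟩, ?_⟩
    · show D.t (f.1 (i + (j : ℕ))) = D.s (f.1 (i + ((j : ℕ) + 1 : ℕ)))
      rw [f.2 (i + (j : ℕ))]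
      congr 1
      push_cast
      ring
    · apply FWalk.ext'
      · funext j
        show f.1 (i + ((j : ℕ) + 1 : ℕ)) = f.1 (i + 1 + (j : ℕ))
        congr 1
        push_cast
        ring
      · funext j
        show D.s (f.1 (i + ((j : ℕ) + 1 : ℕ))) = D.s (f.1 (i + 1 + (j : ℕ)))
        congr 2
        push_cast
        ring
    · apply Subtype.ext
      funext i
      show f.1 (i + (((0 : Fin (L + 2)) : ℕ) : ℤ)) = f.1 i
      simp

/-- The standard map from the past-future digraph `PF(D, m, n)` to `D` is a folding:
it induces a bijection on bi-infinite walks. -/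
theorem stmt4 (D : Digraph') [Fintype D.V] [Fintype D.E] (m n : ℤ) (hm : m ≤ 0) (hn : 0 ≤ n) :
    Function.Bijective (biMap (stdFold D (n - m).toNat)) :=
  fold_bij D _
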